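/- Let d, p ≥ 1, let z : ℝ^d → ℝ^p and ρ : ℝ^d → (0,∞) be bounded measurable functions, and let g : ℝ^d → ℝ be measurable with ∫_{ℝ^d} |g(v) − 1| dv < ∞. Suppose that for every v ∈ ℝ^d the averages m_n(v) := |W_n|^{−1} ∫_{W_n} z(u) z(u−v)ᵀ ρ(u) ρ(u−v) du converge, as n → ∞, to a p×p matrix s(v). Then ∫_{ℝ^d} (g(v) − 1) · |W_n|^{−1} ∫_{W_n ∩ W_{n,v}} z(u) z(u−v)ᵀ ρ(u) ρ(u−v) du dv converges, as n → ∞, to ∫_{ℝ^d} (g(v) − 1) s(v) dv. -/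

import Mathlib

open MeasureTheory Filter Topology

noncomputable section

namespace KFunCLT

/-- Points of `ℝ^d`. -/
abbrev Pt (d : ℕ) := EuclideanSpace ℝ (Fin d)

/-- The observation window `W_n = [-n^{1/d}/2, n^{1/d}/2]^d` of volume `n`. -/
def Wn (d n : ℕ) : Set (Pt d) :=
  {x | ∀ i, |x i| ≤ (n : ℝ) ^ ((1 : ℝ) / (d : ℝ)) / 2}

/-- The window `W_n` translated by `v`. -/
def WnT (d n : ℕ) (v : Pt d) : Set (Pt d) := (fun x => x + v) '' Wn d n

end KFunCLT

open KFunCLT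

-- auxiliary lemmas


namespace KFun13Aux

open Set

/-- side length -/
def an (d n : ℕ) : ℝ := (n : ℝ) ^ ((1 : ℝ) / (d : ℝ))

lemma an_nonneg (d n : ℕ) : 0 ≤ an d n := Real.rpow_nonneg (Nat.cast_nonneg n) _

lemma an_pow (hd : 1 ≤ d) (n : ℕ) : (an d n) ^ d = (n : ℝ) := by
  have hd0 : (d : ℝ) ≠ 0 := Nat.cast_ne_zero.mpr (by omega)
  rw [an, ← Real.rpow_natCast ((n:ℝ) ^ ((1:ℝ)/(d:ℝ))) d, ← Real.rpow_mul (Nat.cast_nonneg n),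
    one_div, inv_mul_cancel₀ hd0, Real.rpow_one]

lemma mem_Wn_iff {d n : ℕ} {x : Pt d} : x ∈ Wn d n ↔ ∀ i, |x i| ≤ an d n / 2 := Iff.rfl

lemma measurableSet_Wn (d n : ℕ) : MeasurableSet (Wn d n) := by
  have : Wn d n = ⋂ i, (fun x : Pt d => x i) ⁻¹' (Icc (-(an d n / 2)) (an d n / 2)) := by
    ext x
    simp [Wn, an, Set.mem_iInter, abs_le]
  rw [this]
  exact MeasurableSet.iInter fun i => ((measurable_pi_apply i).comp (WithLp.measurable_ofLp 2 _)) measurableSet_Icc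

lemma wnT_eq (d n : ℕ) (v : Pt d) : WnT d n v = (fun x : Pt d => x - v) ⁻¹' Wn d n := by
  ext x
  constructor
  · rintro ⟨y, hy, rfl⟩; simpa using hy
  · intro hx; exact ⟨x - v, hx, sub_add_cancel x v⟩

lemma measurableSet_WnT (d n : ℕ) (v : Pt d) : MeasurableSet (WnT d n v) := by
  rw [wnT_eq]
  exact (measurable_id.sub measurable_const) (measurableSet_Wn d n)

lemma vol_Wn (hd : 1 ≤ d) (n : ℕ) : volume (Wn d n) = ENNReal.ofReal n := by
  have hW : Wn d n = (MeasurableEquiv.toLp 2 (Fin d → ℝ)).symm ⁻¹'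
      (Set.univ.pi fun _ : Fin d => Icc (-(an d n / 2)) (an d n / 2)) := by
    ext x
    simp only [Set.mem_preimage, Set.mem_univ_pi, mem_Wn_iff, Set.mem_Icc]
    exact forall_congr' fun i => abs_le
  rw [hW, (EuclideanSpace.volume_preserving_symm_measurableEquiv_toLp (Fin d)).measure_preimage
      (MeasurableSet.univ_pi fun _ => measurableSet_Icc).nullMeasurableSet,
    volume_pi_pi]
  simp only [Real.volume_Icc]
  rw [Finset.prod_const, Finset.card_univ, Fintype.card_fin]
  have : an d n / 2 - -(an d n / 2) = an d n := by ring
  rw [this, ← ENNReal.ofReal_pow (an_nonneg d n), an_pow hd n]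

end KFun13Aux

namespace KFun13Aux2
open Set KFun13Aux

lemma vol_diff_le (d n : ℕ) (v : Pt d) :
    volume (Wn d n \ WnT d n v) ≤
      ENNReal.ofReal ((∑ i, 2 * |v i|) * (an d n) ^ (d - 1)) := by
  set c := an d n / 2 with hc
  have hc0 : 0 ≤ c := div_nonneg (an_nonneg d n) (by norm_num)
  set K : Fin d → Set ℝ := fun i => Icc (-c) (-c + |v i|) ∪ Icc (c - |v i|) c with hK
  set B : Fin d → Set (Pt d) := fun i =>
    (MeasurableEquiv.toLp 2 (Fin d → ℝ)).symm ⁻¹'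
      (Set.univ.pi fun j => if j = i then K i else Icc (-c) c) with hB
  have hsub : Wn d n \ WnT d n v ⊆ ⋃ i, B i := by
    rintro x ⟨hx, hx'⟩
    rw [wnT_eq] at hx'
    have hxv : ¬ ∀ i, |(x - v) i| ≤ c := hx'
    push_neg at hxv
    obtain ⟨i, hi⟩ := hxv
    refine Set.mem_iUnion.2 ⟨i, ?_⟩
    simp only [hB, Set.mem_preimage, Set.mem_univ_pi]
    intro j
    have hre : (MeasurableEquiv.toLp 2 (Fin d → ℝ)).symm x j = x j := rfl
    rw [hre]
    have hxj : |x j| ≤ c := hx j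
    rw [abs_le] at hxj
    by_cases hj : j = i
    · subst hj
      simp only [if_pos rfl, hK, Set.mem_union, Set.mem_Icc]
      have hxvj : (x - v) j = x j - v j := rfl
      rw [hxvj] at hi
      rcases lt_abs.mp hi with h1 | h1
      · right
        exact ⟨by linarith [neg_abs_le (v j)], hxj.2⟩
      · left
        exact ⟨hxj.1, by linarith [le_abs_self (v j)]⟩
    · simp only [if_neg hj, Set.mem_Icc]
      exact hxj
  have hKvol : ∀ i, volume (K i) ≤ ENNReal.ofReal (2 * |v i|) := by
    intro i
    refine (measure_union_le _ _).trans ?_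
    rw [Real.volume_Icc, Real.volume_Icc]
    have h1 : -c + |v i| - -c = |v i| := by ring
    have h2 : c - (c - |v i|) = |v i| := by ring
    rw [h1, h2, ← ENNReal.ofReal_add (abs_nonneg _) (abs_nonneg _), two_mul]
  have hmeasK : ∀ i j : Fin d, MeasurableSet (if j = i then K i else Icc (-c) c) := by
    intro i j
    by_cases hj : j = i
    · rw [if_pos hj, hK]; exact measurableSet_Icc.union measurableSet_Icc
    · rw [if_neg hj]; exact measurableSet_Icc
  have hBvol : ∀ i, volume (B i) ≤ ENNReal.ofReal (2 * |v i| * (an d n) ^ (d - 1)) := by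
    intro i
    rw [hB]
    rw [(EuclideanSpace.volume_preserving_symm_measurableEquiv_toLp (Fin d)).measure_preimage
        (MeasurableSet.univ_pi fun j => hmeasK i j).nullMeasurableSet, volume_pi_pi]
    rw [← Finset.mul_prod_erase Finset.univ _ (Finset.mem_univ i), if_pos rfl]
    have hrest : ∀ j ∈ Finset.univ.erase i,
        volume (if j = i then K i else Icc (-c) c) = ENNReal.ofReal (an d n) := by
      intro j hj
      rw [if_neg (Finset.ne_of_mem_erase hj), Real.volume_Icc]
      congr 1
      rw [hc]; ring
    rw [Finset.prod_congr rfl hrest, Finset.prod_const,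
      Finset.card_erase_of_mem (Finset.mem_univ i), Finset.card_univ, Fintype.card_fin]
    calc volume (K i) * ENNReal.ofReal (an d n) ^ (d - 1)
        ≤ ENNReal.ofReal (2 * |v i|) * ENNReal.ofReal (an d n) ^ (d - 1) :=
          mul_le_mul_left (hKvol i) _
      _ = ENNReal.ofReal (2 * |v i| * (an d n) ^ (d - 1)) := by
          rw [← ENNReal.ofReal_pow (an_nonneg d n), ← ENNReal.ofReal_mul (by positivity)]
  calc volume (Wn d n \ WnT d n v) ≤ volume (⋃ i, B i) := measure_mono hsub
    _ ≤ ∑ i, volume (B i) := measure_iUnion_fintype_le _ _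
    _ ≤ ∑ i, ENNReal.ofReal (2 * |v i| * (an d n) ^ (d - 1)) :=
        Finset.sum_le_sum fun i _ => hBvol i
    _ = ENNReal.ofReal (∑ i, 2 * |v i| * (an d n) ^ (d - 1)) :=
        (ENNReal.ofReal_sum_of_nonneg fun i _ => mul_nonneg (by positivity) (pow_nonneg (an_nonneg d n) _)).symm
    _ = ENNReal.ofReal ((∑ i, 2 * |v i|) * (an d n) ^ (d - 1)) := by rw [← Finset.sum_mul]

end KFun13Aux2

namespace KFun13Main
open Set KFun13Aux KFun13Aux2

theorem main {d : ℕ} (hd : 1 ≤ d) (h : Pt d → Pt d → ℝ)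
    (hjm : Measurable (fun q : Pt d × Pt d => h q.1 q.2))
    (C0 : ℝ) (hC0 : 0 ≤ C0) (hb : ∀ v u, |h v u| ≤ C0)
    (g : Pt d → ℝ) (hgmeas : Measurable g)
    (hgint : Integrable (fun v => g v - 1))
    (s : Pt d → ℝ)
    (hm : ∀ v, Tendsto (fun n : ℕ => ((n : ℝ))⁻¹ * ∫ u in Wn d n, h v u) atTop (𝓝 (s v))) :
    Tendsto (fun n : ℕ => ∫ v, (g v - 1) * (((n : ℝ))⁻¹ * ∫ u in Wn d n ∩ WnT d n v, h v u))
      atTop (𝓝 (∫ v, (g v - 1) * s v)) := by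
  have hmv : ∀ v, Measurable (h v) := fun v =>
    hjm.comp (measurable_const.prodMk measurable_id)
  have hvolWn : ∀ n : ℕ, volume (Wn d n) < ⊤ := fun n => by
    rw [vol_Wn hd n]; exact ENNReal.ofReal_lt_top
  have hintWn : ∀ (n : ℕ) (v : Pt d), IntegrableOn (h v) (Wn d n) := by
    intro n v
    refine Integrable.mono' (g := fun _ => C0) (integrableOn_const (hvolWn n).ne)
      ((hmv v).aestronglyMeasurable) (ae_of_all _ fun u => ?_)
    simpa using hb v u
  -- pointwise convergence of the truncated averages
  have key : ∀ v, Tendsto (fun n : ℕ => ((n : ℝ))⁻¹ * ∫ u in Wn d n ∩ WnT d n v, h v u)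
      atTop (𝓝 (s v)) := by
    intro v
    have hsplit : ∀ n : ℕ, ((n : ℝ))⁻¹ * ∫ u in Wn d n ∩ WnT d n v, h v u
        = (((n : ℝ))⁻¹ * (∫ u in Wn d n, h v u))
          - (((n : ℝ))⁻¹ * (∫ u in Wn d n \ WnT d n v, h v u)) := by
      intro n
      rw [← mul_sub]
      congr 1
      have hsum := integral_inter_add_diff (μ := volume) (f := h v) (s := Wn d n)
        (measurableSet_WnT d n v) (hintWn n v)
      linarith [hsum]
    have herr : Tendsto (fun n : ℕ => ((n : ℝ))⁻¹ * ∫ u in Wn d n \ WnT d n v, h v u)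
        atTop (𝓝 0) := by
      apply squeeze_zero_norm'
        (a := fun n : ℕ => C0 * (∑ i, 2 * |v i|) * ((n : ℝ)) ^ (-((1 : ℝ)/(d : ℝ))))
      · filter_upwards [eventually_ge_atTop 1] with n hn
        have hn0 : 0 < (n : ℝ) := by exact_mod_cast hn
        have han : 0 < an d n := Real.rpow_pos_of_pos hn0 _
        have hS0 : 0 ≤ ∑ i, 2 * |v i| := Finset.sum_nonneg fun i _ => by positivity
        have hvd : (volume (Wn d n \ WnT d n v)).toReal
            ≤ (∑ i, 2 * |v i|) * (an d n) ^ (d - 1) :=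
          ENNReal.toReal_le_of_le_ofReal
            (mul_nonneg hS0 (pow_nonneg (an_nonneg d n) _)) (vol_diff_le d n v)
        have hlt : volume (Wn d n \ WnT d n v) < ⊤ :=
          lt_of_le_of_lt (measure_mono Set.diff_subset) (hvolWn n)
        have hbnd : ‖∫ u in Wn d n \ WnT d n v, h v u‖
            ≤ C0 * (volume (Wn d n \ WnT d n v)).toReal :=
          norm_setIntegral_le_of_norm_le_const (f := h v) hlt (fun u _ => by simpa using hb v u)
        have hna : (n : ℝ)⁻¹ * (an d n) ^ (d - 1) = (n : ℝ) ^ (-((1 : ℝ)/(d : ℝ))) := by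
          have hpow : (an d n) ^ d = (n : ℝ) := an_pow hd n
          have hd1 : d - 1 + 1 = d := by omega
          have : (an d n) ^ (d - 1) * an d n = (n : ℝ) := by
            rw [← pow_succ, hd1, hpow]
          rw [Real.rpow_neg hn0.le, ← an]
          field_simp [← hpow, ← pow_succ, hd1]
          exact this
        calc ‖((n : ℝ))⁻¹ * ∫ u in Wn d n \ WnT d n v, h v u‖
            = (n : ℝ)⁻¹ * ‖∫ u in Wn d n \ WnT d n v, h v u‖ := by
              rw [norm_mul, norm_inv, Real.norm_natCast]
          _ ≤ (n : ℝ)⁻¹ * (C0 * ((∑ i, 2 * |v i|) * (an d n) ^ (d - 1))) := by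
              refine mul_le_mul_of_nonneg_left (hbnd.trans ?_) (by positivity)
              exact mul_le_mul_of_nonneg_left hvd hC0
          _ = C0 * (∑ i, 2 * |v i|) * ((n : ℝ)⁻¹ * (an d n) ^ (d - 1)) := by ring
          _ = C0 * (∑ i, 2 * |v i|) * ((n : ℝ)) ^ (-((1 : ℝ)/(d : ℝ))) := by rw [hna]
      · have hpos : (0 : ℝ) < (1 : ℝ)/(d : ℝ) := by
          have : (0 : ℝ) < (d : ℝ) := by exact_mod_cast hd
          positivity
        have h0 : Tendsto (fun n : ℕ => ((n : ℝ)) ^ (-((1 : ℝ)/(d : ℝ)))) atTop (𝓝 0) :=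
          (tendsto_rpow_neg_atTop hpos).comp tendsto_natCast_atTop_atTop
        simpa using h0.const_mul (C0 * (∑ i, 2 * |v i|))
    have := (hm v).sub herr
    rw [sub_zero] at this
    exact this.congr fun n => (hsplit n).symm
  -- uniform bound
  have hFbd : ∀ (n : ℕ) (v : Pt d),
      |((n : ℝ))⁻¹ * ∫ u in Wn d n ∩ WnT d n v, h v u| ≤ C0 := by
    intro n v
    have hlt : volume (Wn d n ∩ WnT d n v) < ⊤ :=
      lt_of_le_of_lt (measure_mono Set.inter_subset_left) (hvolWn n)
    have h1 : ‖∫ u in Wn d n ∩ WnT d n v, h v u‖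
        ≤ C0 * (volume (Wn d n ∩ WnT d n v)).toReal :=
      norm_setIntegral_le_of_norm_le_const (f := h v) hlt (fun u _ => by simpa using hb v u)
    have h2 : (volume (Wn d n ∩ WnT d n v)).toReal ≤ (n : ℝ) := by
      refine ENNReal.toReal_le_of_le_ofReal (Nat.cast_nonneg n) ?_
      rw [← vol_Wn hd n]
      exact measure_mono Set.inter_subset_left
    have hle : (n : ℝ)⁻¹ * (n : ℝ) ≤ 1 := by
      rcases eq_or_ne ((n : ℝ)) 0 with hn | hn
      · simp [hn]
      · rw [inv_mul_cancel₀ hn]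
    calc |((n : ℝ))⁻¹ * ∫ u in Wn d n ∩ WnT d n v, h v u|
        = (n : ℝ)⁻¹ * ‖∫ u in Wn d n ∩ WnT d n v, h v u‖ := by
          rw [abs_mul, abs_inv, Nat.abs_cast, Real.norm_eq_abs]
      _ ≤ (n : ℝ)⁻¹ * (C0 * (n : ℝ)) := by
          refine mul_le_mul_of_nonneg_left (h1.trans ?_) (by positivity)
          exact mul_le_mul_of_nonneg_left h2 hC0
      _ = C0 * ((n : ℝ)⁻¹ * (n : ℝ)) := by ring
      _ ≤ C0 * 1 := mul_le_mul_of_nonneg_left hle hC0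
      _ = C0 := mul_one _
  -- measurability in `v`
  have hSmeas : ∀ n : ℕ,
      MeasurableSet {q : Pt d × Pt d | q.2 ∈ Wn d n ∧ q.2 - q.1 ∈ Wn d n} :=
    fun n => (measurable_snd (measurableSet_Wn d n)).inter
      ((measurable_snd.sub measurable_fst) (measurableSet_Wn d n))
  have hrepr : ∀ (n : ℕ) (v : Pt d), (∫ u in Wn d n ∩ WnT d n v, h v u)
      = ∫ u, Set.indicator {q : Pt d × Pt d | q.2 ∈ Wn d n ∧ q.2 - q.1 ∈ Wn d n}
          (fun q => h q.1 q.2) (v, u) := by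
    intro n v
    rw [← integral_indicator ((measurableSet_Wn d n).inter (measurableSet_WnT d n v))]
    congr 1
    funext u
    by_cases hu : u ∈ Wn d n ∩ WnT d n v
    · rw [Set.indicator_of_mem hu]
      have hu' : (v, u) ∈ {q : Pt d × Pt d | q.2 ∈ Wn d n ∧ q.2 - q.1 ∈ Wn d n} :=
        ⟨hu.1, by have := hu.2; rw [wnT_eq] at this; exact this⟩
      rw [Set.indicator_of_mem hu']
    · rw [Set.indicator_of_notMem hu, Set.indicator_of_notMem ?_]
      intro hc
      exact hu ⟨hc.1, by rw [wnT_eq]; exact hc.2⟩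
  have hFmeasv : ∀ n : ℕ, AEStronglyMeasurable
      (fun v => ((n : ℝ))⁻¹ * ∫ u in Wn d n ∩ WnT d n v, h v u) volume := by
    intro n
    apply AEStronglyMeasurable.const_mul
    have hjsm : StronglyMeasurable fun q : Pt d × Pt d =>
        Set.indicator {q : Pt d × Pt d | q.2 ∈ Wn d n ∧ q.2 - q.1 ∈ Wn d n}
          (fun q => h q.1 q.2) q :=
      (hjm.indicator (hSmeas n)).stronglyMeasurable
    have hsm := hjsm.integral_prod_right' (ν := (volume : Measure (Pt d)))
    have heq : (fun v : Pt d => ∫ u in Wn d n ∩ WnT d n v, h v u)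
        = fun v : Pt d => ∫ u, Set.indicator
            {q : Pt d × Pt d | q.2 ∈ Wn d n ∧ q.2 - q.1 ∈ Wn d n}
            (fun q => h q.1 q.2) (v, u) := funext fun v => hrepr n v
    rw [heq]
    exact hsm.aestronglyMeasurable
  refine tendsto_integral_of_dominated_convergence (fun v => C0 * |g v - 1|)
    (fun n => ((hgmeas.sub measurable_const).aestronglyMeasurable).mul (hFmeasv n))
    (hgint.abs.const_mul C0) (fun n => ae_of_all _ fun v => ?_) (ae_of_all _ fun v => ?_)
  · rw [norm_mul, Real.norm_eq_abs, Real.norm_eq_abs]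
    calc |g v - 1| * |((n : ℝ))⁻¹ * ∫ u in Wn d n ∩ WnT d n v, h v u|
        ≤ |g v - 1| * C0 := mul_le_mul_of_nonneg_left (hFbd n v) (abs_nonneg _)
      _ = C0 * |g v - 1| := mul_comm _ _
  · exact (key v).const_mul (g v - 1)

end KFun13Main

private lemma abs_coord_le_norm {p : ℕ} (x : EuclideanSpace ℝ (Fin p)) (i : Fin p) :
    |x i| ≤ ‖x‖ := by
  rw [EuclideanSpace.norm_eq]
  calc |x i| = Real.sqrt (|x i| ^ (2 : ℕ)) := by rw [Real.sqrt_sq_eq_abs, abs_abs]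
    _ ≤ _ := Real.sqrt_le_sqrt (Finset.single_le_sum
        (f := fun j => |x j| ^ (2 : ℕ)) (fun j _ => sq_nonneg _) (Finset.mem_univ i))

/-- convergence (entrywise) of
`∫ (g(v)−1) |W_n|⁻¹ ∫_{W_n ∩ W_{n,v}} z(u)z(u−v)ᵀ ρ(u)ρ(u−v) du dv`
to `∫ (g(v)−1) s(v) dv`, given the convergence of the spatial averages
`m_n(v) = |W_n|⁻¹ ∫_{W_n} z(u)z(u−v)ᵀ ρ(u)ρ(u−v) du` to `s(v)`. -/
theorem statement13
    {d p : ℕ} (hd : 1 ≤ d) (hp : 1 ≤ p)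
    (z : Pt d → EuclideanSpace ℝ (Fin p)) (hzmeas : Measurable z)
    (hzbdd : ∃ M : ℝ, ∀ x, ‖z x‖ ≤ M)
    (ρ : Pt d → ℝ) (hρmeas : Measurable ρ) (hρpos : ∀ x, 0 < ρ x)
    (hρbdd : ∃ M : ℝ, ∀ x, ρ x ≤ M)
    (g : Pt d → ℝ) (hgmeas : Measurable g)
    (hgint : Integrable (fun v => g v - 1))
    (s : Pt d → Fin p → Fin p → ℝ)
    (hm : ∀ v : Pt d, ∀ i j : Fin p,
      Tendsto (fun n : ℕ =>
          ((n : ℝ))⁻¹ * ∫ u in Wn d n, z u i * z (u - v) j * ρ u * ρ (u - v))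
        atTop (𝓝 (s v i j))) :
    ∀ i j : Fin p,
      Tendsto (fun n : ℕ => ∫ v, (g v - 1) *
          (((n : ℝ))⁻¹ *
            ∫ u in Wn d n ∩ WnT d n v, z u i * z (u - v) j * ρ u * ρ (u - v)))
        atTop (𝓝 (∫ v, (g v - 1) * s v i j)) := by
  intro i j
  obtain ⟨Mz, hMz⟩ := hzbdd
  obtain ⟨Mρ, hMρ⟩ := hρbdd
  set Mz' : ℝ := max Mz 0 with hMz'
  set Mρ' : ℝ := max Mρ 0 with hMρ'
  have hMz'0 : 0 ≤ Mz' := le_max_right _ _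
  have hMρ'0 : 0 ≤ Mρ' := le_max_right _ _
  have hz' : ∀ x (k : Fin p), |z x k| ≤ Mz' := fun x k =>
    (abs_coord_le_norm (z x) k).trans ((hMz x).trans (le_max_left _ _))
  have hρ' : ∀ x, |ρ x| ≤ Mρ' := fun x =>
    (abs_of_pos (hρpos x)).symm ▸ ((hMρ x).trans (le_max_left _ _))
  have hjm : Measurable fun q : Pt d × Pt d =>
      z q.2 i * z (q.2 - q.1) j * ρ q.2 * ρ (q.2 - q.1) := by
    have hz2 : Measurable fun q : Pt d × Pt d => q.2 - q.1 :=
      measurable_snd.sub measurable_fst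
    exact ((((measurable_pi_apply i).comp ((WithLp.measurable_ofLp 2 _).comp (hzmeas.comp measurable_snd))).mul
      ((measurable_pi_apply j).comp ((WithLp.measurable_ofLp 2 _).comp (hzmeas.comp hz2)))).mul
      (hρmeas.comp measurable_snd)).mul (hρmeas.comp hz2)
  have hb : ∀ v u : Pt d,
      |z u i * z (u - v) j * ρ u * ρ (u - v)| ≤ Mz' * Mz' * (Mρ' * Mρ') := by
    intro v u
    calc |z u i * z (u - v) j * ρ u * ρ (u - v)|
        = |z u i| * |z (u - v) j| * |ρ u| * |ρ (u - v)| := by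
          rw [abs_mul, abs_mul, abs_mul]
      _ ≤ Mz' * Mz' * Mρ' * Mρ' := by
          refine mul_le_mul (mul_le_mul (mul_le_mul (hz' u i) (hz' (u - v) j)
            (abs_nonneg _) hMz'0) (hρ' u) (abs_nonneg _) (mul_nonneg hMz'0 hMz'0))
            (hρ' (u - v)) (abs_nonneg _) ?_
          exact mul_nonneg (mul_nonneg hMz'0 hMz'0) hMρ'0
      _ = Mz' * Mz' * (Mρ' * Mρ') := by ring
  exact KFun13Main.main hd (fun v u => z u i * z (u - v) j * ρ u * ρ (u - v)) hjm
    (Mz' * Mz' * (Mρ' * Mρ'))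
    (mul_nonneg (mul_nonneg hMz'0 hMz'0) (mul_nonneg hMρ'0 hMρ'0)) hb
    g hgmeas hgint (fun v => s v i j) (fun v => hm v i j)
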